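/- Let F be the standard normal CDF, F(x) = (1/2)(1 + erf(x/√2)). Then ∫_{-∞}^{∞} {1 - F(x)² - (1-F(x))²} dx = 2/√π. -/

import Mathlib

open Real MeasureTheory Filter Set Topology

/-- The standard normal cumulative distribution function. -/
noncomputable def normalCDF (x : ℝ) : ℝ :=
  ∫ t in Set.Iic x, Real.exp (-t^2/2) / Real.sqrt (2*π)

noncomputable def phi (x : ℝ) : ℝ := Real.exp (-x^2/2) / Real.sqrt (2*π)

lemma phi_eq (x : ℝ) : phi x = Real.exp (-(1/2) * x^2) / Real.sqrt (2*π) := by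
  rw [phi]; ring_nf

lemma phi_pos (x : ℝ) : 0 < phi x := by
  apply div_pos (exp_pos _) (Real.sqrt_pos.2 (by positivity))

lemma continuous_phi : Continuous phi := by
  apply Continuous.div_const
  exact (continuous_exp.comp (by continuity))

lemma integrable_phi : Integrable phi := by
  have h : Integrable (fun x : ℝ => Real.exp (-(1/2) * x^2)) :=
    integrable_exp_neg_mul_sq (by norm_num)
  have := h.div_const (Real.sqrt (2*π))
  apply this.congr
  filter_upwards with x
  rw [phi_eq]

lemma integral_phi : ∫ x, phi x = 1 := by
  simp only [phi_eq]
  rw [integral_div, integral_gaussian]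
  rw [div_eq_one_iff_eq (by positivity)]
  congr 1
  rw [div_div_eq_mul_div, div_one]
  ring

lemma normalCDF_eq (x : ℝ) : normalCDF x = ∫ t in Set.Iic x, phi t := rfl

lemma normalCDF_eq' (x : ℝ) : normalCDF x = normalCDF 0 + ∫ t in (0:ℝ)..x, phi t := by
  rw [normalCDF_eq, normalCDF_eq,
    ← intervalIntegral.integral_Iic_sub_Iic integrable_phi.integrableOn
      integrable_phi.integrableOn]
  ring

lemma hasDerivAt_normalCDF (x : ℝ) : HasDerivAt normalCDF (phi x) x := by
  have h : HasDerivAt (fun y => normalCDF 0 + ∫ t in (0:ℝ)..y, phi t) (phi x) x := by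
    apply HasDerivAt.const_add
    exact intervalIntegral.integral_hasDerivAt_right
      (integrable_phi.intervalIntegrable)
      (continuous_phi.stronglyMeasurable.stronglyMeasurableAtFilter)
      continuous_phi.continuousAt
  apply h.congr_of_eventuallyEq
  filter_upwards with y using (normalCDF_eq' y)

lemma continuous_normalCDF : Continuous normalCDF := by
  rw [continuous_iff_continuousAt]
  exact fun x => (hasDerivAt_normalCDF x).continuousAt

lemma one_sub_normalCDF (x : ℝ) : 1 - normalCDF x = ∫ t in Set.Ioi x, phi t := by
  have h := intervalIntegral.integral_Iic_add_Ioi (μ := volume) (b := x)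
    integrable_phi.integrableOn integrable_phi.integrableOn
  rw [integral_phi] at h
  rw [normalCDF_eq]
  linarith

lemma normalCDF_nonneg (x : ℝ) : 0 ≤ normalCDF x :=
  setIntegral_nonneg measurableSet_Iic (fun t _ => (phi_pos t).le)

lemma normalCDF_le_one (x : ℝ) : normalCDF x ≤ 1 := by
  rw [← sub_nonneg, one_sub_normalCDF]
  exact setIntegral_nonneg measurableSet_Ioi (fun t _ => (phi_pos t).le)

lemma phi_neg (x : ℝ) : phi (-x) = phi x := by simp [phi]

lemma normalCDF_neg (x : ℝ) : normalCDF (-x) = 1 - normalCDF x := by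
  rw [normalCDF_eq, one_sub_normalCDF]
  have : ∀ t, phi t = phi (-t) := fun t => (phi_neg t).symm
  rw [show (∫ t in Set.Iic (-x), phi t) = ∫ t in Set.Iic (-x), phi (-t) by
    congr 1; funext t; rw [phi_neg]]
  rw [integral_comp_neg_Iic, neg_neg]

lemma normalCDF_zero : normalCDF 0 = 1/2 := by
  have := normalCDF_neg 0
  rw [neg_zero] at this
  linarith

lemma integral_phi_Ioi_zero : ∫ t in Set.Ioi (0:ℝ), phi t = 1/2 := by
  rw [← one_sub_normalCDF, normalCDF_zero]; norm_num

lemma integral_phi_shift (x : ℝ) : ∫ t in Set.Ioi x, phi (t - x) = 1/2 := by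
  have h1 : (fun t => Set.indicator (Set.Ioi x) (fun t => phi (t - x)) t)
      = fun t => Set.indicator (Set.Ioi (0:ℝ)) phi (t - x) := by
    funext t
    by_cases ht : t ∈ Set.Ioi x
    · rw [Set.indicator_of_mem ht, Set.indicator_of_mem (by simpa using sub_pos.2 (Set.mem_Ioi.1 ht))]
    · rw [Set.indicator_of_notMem ht, Set.indicator_of_notMem
        (by simp only [Set.mem_Ioi] at ht ⊢; linarith [not_lt.1 ht])]
  rw [← integral_indicator measurableSet_Ioi, h1,
    integral_sub_right_eq_self (Set.indicator (Set.Ioi (0:ℝ)) phi) x,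
    integral_indicator measurableSet_Ioi, integral_phi_Ioi_zero]

lemma normalCDF_tail {x : ℝ} (hx : 0 ≤ x) : 1 - normalCDF x ≤ Real.exp (-x^2/2) / 2 := by
  rw [one_sub_normalCDF]
  have key : ∀ t ∈ Set.Ioi x, phi t ≤ Real.exp (-x^2/2) * phi (t - x) := by
    intro t ht
    simp only [Set.mem_Ioi] at ht
    rw [phi, phi, ← mul_div_assoc, div_le_div_iff_of_pos_right (by positivity),
      ← Real.exp_add]
    apply Real.exp_le_exp.2
    nlinarith
  calc (∫ t in Set.Ioi x, phi t)
      ≤ ∫ t in Set.Ioi x, Real.exp (-x^2/2) * phi (t - x) := by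
        apply setIntegral_mono_on integrable_phi.integrableOn
          (((integrable_phi.comp_sub_right x).const_mul _).integrableOn)
          measurableSet_Ioi key
    _ = Real.exp (-x^2/2) * ∫ t in Set.Ioi x, phi (t - x) := integral_const_mul _ _
    _ = Real.exp (-x^2/2) / 2 := by rw [integral_phi_shift]; ring

lemma tendsto_normalCDF_atTop : Tendsto normalCDF atTop (𝓝 1) := by
  have h := intervalIntegral_tendsto_integral_Ioi (0:ℝ)
    (integrable_phi.integrableOn (s := Set.Ioi 0)) tendsto_id
  have h2 : Tendsto (fun x => normalCDF 0 + ∫ t in (0:ℝ)..x, phi t) atTop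
      (𝓝 (normalCDF 0 + ∫ t in Set.Ioi (0:ℝ), phi t)) := tendsto_const_nhds.add h
  rw [integral_phi_Ioi_zero, normalCDF_zero] at h2
  norm_num at h2
  apply h2.congr
  intro x
  rw [normalCDF_eq' x, normalCDF_zero]

lemma tendsto_normalCDF_atBot : Tendsto normalCDF atBot (𝓝 0) := by
  have h : Tendsto (fun x => 1 - normalCDF (-x)) atBot (𝓝 (1 - 1)) := by
    apply Tendsto.const_sub
    exact tendsto_normalCDF_atTop.comp tendsto_neg_atBot_atTop
  norm_num at h
  apply h.congr
  intro x
  rw [normalCDF_neg]; ring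

lemma tendsto_x_exp_atTop : Tendsto (fun x : ℝ => x * Real.exp (-x^2/2)) atTop (𝓝 0) := by
  have h := Real.tendsto_pow_mul_exp_neg_atTop_nhds_zero 1
  apply squeeze_zero' ?_ ?_ h
  · filter_upwards [eventually_ge_atTop (0:ℝ)] with x hx
    positivity
  · filter_upwards [eventually_ge_atTop (2:ℝ)] with x hx
    rw [pow_one]
    apply mul_le_mul_of_nonneg_left _ (by linarith)
    apply Real.exp_le_exp.2
    nlinarith

lemma tendsto_tail_atTop :
    Tendsto (fun x => 2 * x * normalCDF x * (1 - normalCDF x)) atTop (𝓝 0) := by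
  have h2 : Tendsto (fun x : ℝ => x * Real.exp (-x^2/2)) atTop (𝓝 0) := tendsto_x_exp_atTop
  apply squeeze_zero' ?_ ?_ h2
  · filter_upwards [eventually_ge_atTop (0:ℝ)] with x hx
    have hF0 := normalCDF_nonneg x
    have hF1 := normalCDF_le_one x
    have h4 : (0:ℝ) ≤ 1 - normalCDF x := by linarith
    calc (0:ℝ) = 0 * (1 - normalCDF x) := by ring
    _ ≤ 2 * x * normalCDF x * (1 - normalCDF x) := by
        apply mul_le_mul_of_nonneg_right _ h4
        positivity
  · filter_upwards [eventually_ge_atTop (0:ℝ)] with x hx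
    have h3 := normalCDF_tail hx
    have hF0 := normalCDF_nonneg x
    have hF1 := normalCDF_le_one x
    have h4 : (0:ℝ) ≤ 1 - normalCDF x := by linarith
    nlinarith [mul_le_mul_of_nonneg_left h3 (show (0:ℝ) ≤ 2*x by linarith),
      mul_nonneg (mul_nonneg hx h4) h4]

lemma tendsto_tail_atBot :
    Tendsto (fun x => 2 * x * normalCDF x * (1 - normalCDF x)) atBot (𝓝 0) := by
  have h := (tendsto_tail_atTop.comp tendsto_neg_atBot_atTop).neg
  rw [neg_zero] at h
  apply h.congr
  intro x
  simp only [Function.comp_apply, normalCDF_neg]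
  ring

lemma tendsto_phi_atTop : Tendsto phi atTop (𝓝 0) := by
  rw [show (0:ℝ) = 0 / Real.sqrt (2*π) by norm_num]
  apply Tendsto.div_const
  apply Real.tendsto_exp_atBot.comp
  have h1 : Tendsto (fun x : ℝ => x^2) atTop atTop := tendsto_pow_atTop two_ne_zero
  have h2 : Tendsto (fun x : ℝ => -x^2) atTop atBot := tendsto_neg_atTop_atBot.comp h1
  have h3 := h2.atBot_mul_const (show (0:ℝ) < 1/2 by norm_num)
  apply h3.congr
  intro x
  ring

lemma tendsto_phi_atBot : Tendsto phi atBot (𝓝 0) := by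
  have := tendsto_phi_atTop.comp tendsto_neg_atBot_atTop
  apply this.congr
  intro x
  simp only [Function.comp_apply, phi_neg]

lemma hasDerivAt_phi (x : ℝ) : HasDerivAt phi (-x * phi x) x := by
  have h1 : HasDerivAt (fun y : ℝ => -y^2/2) (-x) x := by
    have := ((hasDerivAt_pow 2 x).neg).div_const 2
    refine this.congr_deriv ?_
    norm_num; ring
  have h2 := (h1.exp).div_const (Real.sqrt (2*π))
  refine h2.congr_deriv ?_
  rw [phi]
  ring

noncomputable def A (y : ℝ) : ℝ :=
  2*y*normalCDF y*(1 - normalCDF y) + 2*phi y*(1 - 2*normalCDF y)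
    + (2/Real.sqrt π)*normalCDF (Real.sqrt 2 * y)

lemma phi_key (x : ℝ) :
    2 / Real.sqrt π * (Real.sqrt 2 * phi (Real.sqrt 2 * x)) = 4 * (phi x * phi x) := by
  rw [phi, phi]
  have h2 : Real.sqrt (2*π) = Real.sqrt 2 * Real.sqrt π :=
    Real.sqrt_mul (by norm_num) _
  have hs2 : Real.sqrt 2 * Real.sqrt 2 = 2 := Real.mul_self_sqrt (by norm_num)
  have hsp : Real.sqrt π * Real.sqrt π = π := Real.mul_self_sqrt pi_pos.le
  have he : -(Real.sqrt 2 * x)^2/2 = -x^2/2 + -x^2/2 := by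
    rw [mul_pow]; rw [show Real.sqrt 2 ^2 = Real.sqrt 2 * Real.sqrt 2 by ring, hs2]; ring
  rw [he, Real.exp_add]
  have hπ : (0:ℝ) < π := pi_pos
  have h2p : (0:ℝ) < Real.sqrt 2 := by positivity
  have hpp : (0:ℝ) < Real.sqrt π := Real.sqrt_pos.2 hπ
  have h23 : Real.sqrt 2 ^ 3 = 2 * Real.sqrt 2 := by
    rw [pow_succ, pow_two, hs2]
  field_simp [h2]
  ring_nf
  rw [show Real.sqrt (π * 2) = Real.sqrt 2 * Real.sqrt π by rw [mul_comm]; exact h2]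
  linear_combination (2 * Real.sqrt π) * hs2

lemma hasDerivAt_A (x : ℝ) :
    HasDerivAt A (1 - (normalCDF x)^2 - (1 - normalCDF x)^2) x := by
  have hF := hasDerivAt_normalCDF x
  have hphi := hasDerivAt_phi x
  have hF2 := (hasDerivAt_normalCDF (Real.sqrt 2 * x)).comp x
    ((hasDerivAt_id x).const_mul (Real.sqrt 2))
  have d1 := (((hasDerivAt_id x).const_mul 2).mul hF).mul ((hasDerivAt_const x 1).sub hF)
  have d2 := (hphi.const_mul 2).mul ((hasDerivAt_const x 1).sub (hF.const_mul 2))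
  have d3 := hF2.const_mul (2/Real.sqrt π)
  have total := (d1.add d2).add d3
  have heq : A = fun y => 2 * id y * normalCDF y * (1 - normalCDF y)
      + 2 * phi y * (1 - 2 * normalCDF y)
      + 2 / Real.sqrt π * (normalCDF ∘ HMul.hMul (Real.sqrt 2)) y := by
    funext y
    simp only [A, Function.comp_def, id_eq]
  rw [heq]
  refine total.congr_deriv ?_
  simp only [Pi.mul_apply, Pi.sub_apply, id_eq]
  have hk := phi_key x
  linear_combination hk

lemma integrand_integrable :
    Integrable (fun x => 1 - (normalCDF x)^2 - (1 - normalCDF x)^2) := by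
  have hg : Integrable (fun x : ℝ => Real.exp (-(1/2) * x^2)) :=
    integrable_exp_neg_mul_sq (by norm_num)
  apply hg.mono
  · apply Continuous.aestronglyMeasurable
    exact (continuous_const.sub (continuous_normalCDF.pow 2)).sub
      ((continuous_const.sub continuous_normalCDF).pow 2)
  · filter_upwards with x
    rw [Real.norm_eq_abs, Real.norm_eq_abs, abs_of_pos (Real.exp_pos _)]
    rcases le_or_gt 0 x with hx | hx
    · have h3 := normalCDF_tail hx
      have hF0 := normalCDF_nonneg x
      have hF1 := normalCDF_le_one x
      rw [abs_le]
      constructor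
      · nlinarith [Real.exp_pos (-(1/2) * x^2)]
      · have : Real.exp (-x^2/2) = Real.exp (-(1/2)*x^2) := by ring_nf
        nlinarith
    · have h3 := normalCDF_tail (show (0:ℝ) ≤ -x by linarith)
      rw [normalCDF_neg] at h3
      have hF0 := normalCDF_nonneg x
      have hF1 := normalCDF_le_one x
      have he : Real.exp (-(-x)^2/2) = Real.exp (-(1/2)*x^2) := by ring_nf
      rw [he] at h3
      rw [abs_le]
      constructor
      · nlinarith [Real.exp_pos (-(1/2) * x^2)]
      · nlinarith

lemma tendsto_A_atTop : Tendsto A atTop (𝓝 (2 / Real.sqrt π)) := by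
  have t1 := tendsto_tail_atTop
  have t2 : Tendsto (fun y => 2 * phi y * (1 - 2 * normalCDF y)) atTop
      (𝓝 (2 * 0 * (1 - 2 * 1))) :=
    (tendsto_phi_atTop.const_mul 2).mul
      (tendsto_const_nhds.sub (tendsto_normalCDF_atTop.const_mul 2))
  have t3 : Tendsto (fun y => (2 / Real.sqrt π) * normalCDF (Real.sqrt 2 * y)) atTop
      (𝓝 ((2 / Real.sqrt π) * 1)) := by
    apply Tendsto.const_mul
    apply tendsto_normalCDF_atTop.comp
    exact Tendsto.const_mul_atTop (by positivity) tendsto_id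
  have := (t1.add t2).add t3
  norm_num at this
  exact this

lemma tendsto_A_atBot : Tendsto A atBot (𝓝 0) := by
  have t1 := tendsto_tail_atBot
  have t2 : Tendsto (fun y => 2 * phi y * (1 - 2 * normalCDF y)) atBot
      (𝓝 (2 * 0 * (1 - 2 * 0))) :=
    (tendsto_phi_atBot.const_mul 2).mul
      (tendsto_const_nhds.sub (tendsto_normalCDF_atBot.const_mul 2))
  have t3 : Tendsto (fun y => (2 / Real.sqrt π) * normalCDF (Real.sqrt 2 * y)) atBot
      (𝓝 ((2 / Real.sqrt π) * 0)) := by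
    apply Tendsto.const_mul
    apply tendsto_normalCDF_atBot.comp
    exact Tendsto.const_mul_atBot (by positivity) tendsto_id
  have := (t1.add t2).add t3
  norm_num at this
  exact this

/-- `∫ 1 - F(x)² - (1-F(x))² dx = 2/√π`. -/
theorem stmt1 :
    ∫ x : ℝ, (1 - (normalCDF x)^2 - (1 - normalCDF x)^2) = 2 / Real.sqrt π := by
  rw [MeasureTheory.integral_of_hasDerivAt_of_tendsto hasDerivAt_A integrand_integrable
    tendsto_A_atBot tendsto_A_atTop]
  ring
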